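/- For even n = 2k with k ≥ 3, the wheel W_n decomposes into k − 1 pairwise edge-disjoint paths and a single edge; consequently W_n is of class 1^±. -/

import Mathlib

open SimpleGraph

namespace Signed

variable {V : Type*}

/-- The color set `M n`. -/
def colorSet (n : ℕ) : Set ℤ :=
  {m : ℤ | 2 * m.natAbs ≤ n ∧ (Even n → m ≠ 0)}

/-- `f` is an `n`-edge-coloring of the signed graph `(G, σ)`. -/
def IsEdgeColoring (G : SimpleGraph V) (σ : Sym2 V → ℤ) (n : ℕ)
    (f : V → Sym2 V → ℤ) : Prop :=
  (∀ u v, G.Adj u v → f u s(u, v) ∈ colorSet n) ∧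
  (∀ u v, G.Adj u v → f u s(u, v) = - σ s(u, v) * f v s(u, v)) ∧
  (∀ u v w, G.Adj u v → G.Adj u w → v ≠ w → f u s(u, v) ≠ f u s(u, w))

/-- `(G, σ)` admits an `n`-edge-coloring. -/
def Colorable (G : SimpleGraph V) (σ : Sym2 V → ℤ) (n : ℕ) : Prop :=
  ∃ f, IsEdgeColoring G σ n f

/-- The signed chromatic index. -/
noncomputable def chromIndex (G : SimpleGraph V) (σ : Sym2 V → ℤ) : ℕ :=
  sInf {n | Colorable G σ n}

/-- `σ` is a signature on `G`: it takes values `±1` on edges. -/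
def IsSignature (G : SimpleGraph V) (σ : Sym2 V → ℤ) : Prop :=
  ∀ e ∈ G.edgeSet, σ e = 1 ∨ σ e = -1

/-- Maximum degree (classical decidability). -/
noncomputable def maxDeg [Fintype V] (G : SimpleGraph V) : ℕ :=
  @SimpleGraph.maxDegree V G _ (Classical.decRel _)

/-- degree of a vertex, instance-free. -/
noncomputable def deg (G : SimpleGraph V) (v : V) : ℕ :=
  (G.neighborSet v).ncard

/-- A signed graph is balanced if every cycle has sign product `1`. -/
def Balanced (H : SimpleGraph V) (σ : Sym2 V → ℤ) : Prop :=
  ∀ (u : V) (w : H.Walk u u), w.IsCycle → (w.edges.map σ).prod = 1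

/-- A set of edges of `G` forming a matching. -/
def IsMatchingSet (G : SimpleGraph V) (M : Set (Sym2 V)) : Prop :=
  M ⊆ G.edgeSet ∧ ∀ e ∈ M, ∀ e' ∈ M, ∀ v : V, v ∈ e → v ∈ e' → e = e'

/-- `H` is a path graph: some path walk carries all of its edges. -/
def IsPathGraph (H : SimpleGraph V) : Prop :=
  ∃ (u v : V) (p : H.Walk u v), p.IsPath ∧ ∀ e, e ∈ H.edgeSet ↔ e ∈ p.edges

/-- Class `1^±`. -/
def Class1pm [Fintype V] (G : SimpleGraph V) : Prop :=
  ∀ σ : Sym2 V → ℤ, IsSignature G σ → chromIndex G σ = maxDeg G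

/-- Class `2^±`. -/
def Class2pm [Fintype V] (G : SimpleGraph V) : Prop :=
  ∀ σ : Sym2 V → ℤ, IsSignature G σ → chromIndex G σ = maxDeg G + 1

end Signed

open Signed SimpleGraph


/-- The relation defining the wheel with rim of length `m`. -/
def WheelRel (m : ℕ) : Option (Fin m) → Option (Fin m) → Prop
  | none, some _ => True
  | some i, some j => j.val = (i.val + 1) % m
  | _, _ => False

/-- The wheel graph with rim cycle of length `m` (so `n = m + 1` vertices). -/
def Wheel (m : ℕ) : SimpleGraph (Option (Fin m)) :=
  SimpleGraph.fromRel (WheelRel m)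

namespace WheelAux

abbrev VV (k : ℕ) := Option (Fin (2*k-1))

def wv (k : ℕ) (i : ℕ) : VV k :=
  if h : 0 < 2*k-1 then some ⟨i % (2*k-1), Nat.mod_lt _ h⟩ else none

variable {k : ℕ}

lemma wv_def (hk : 3 ≤ k) (i : ℕ) :
    wv k i = some ⟨i % (2*k-1), Nat.mod_lt _ (by omega)⟩ := dif_pos (by omega)

lemma wv_ne_none (hk : 3 ≤ k) (i : ℕ) : wv k i ≠ none := by
  rw [wv_def hk]; simp

lemma wv_eq_iff (hk : 3 ≤ k) {i j : ℕ} :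
    wv k i = wv k j ↔ i % (2*k-1) = j % (2*k-1) := by
  rw [wv_def hk, wv_def hk]
  simp [Fin.ext_iff]

lemma wv_fin (hk : 3 ≤ k) (i : Fin (2*k-1)) : wv k i.val = some i := by
  rw [wv_def hk]
  congr 1
  exact Fin.ext (Nat.mod_eq_of_lt i.isLt)

lemma wv_mod (hk : 3 ≤ k) (i : ℕ) : wv k (i % (2*k-1)) = wv k i := by
  rw [wv_eq_iff hk, Nat.mod_mod_of_dvd _ dvd_rfl]

lemma wv_eq_of_lt (hk : 3 ≤ k) {i j : ℕ} (hi : i < 2*k-1) (hj : j < 2*k-1)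
    (h : wv k i = wv k j) : i = j := by
  rw [wv_eq_iff hk, Nat.mod_eq_of_lt hi, Nat.mod_eq_of_lt hj] at h
  exact h

def spoke (k i : ℕ) : Sym2 (VV k) := s(none, wv k i)
def rim (k i : ℕ) : Sym2 (VV k) := s(wv k i, wv k (i+1))

lemma adj_none_wv (hk : 3 ≤ k) (i : ℕ) : (Wheel (2*k-1)).Adj none (wv k i) := by
  rw [wv_def hk, Wheel, fromRel_adj]
  exact ⟨by simp, Or.inl trivial⟩

lemma succ_mod_ne (hk : 3 ≤ k) (i : ℕ) : i % (2*k-1) ≠ (i+1) % (2*k-1) := by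
  intro h
  have : (2*k-1) ∣ (i+1) - i := (Nat.modEq_iff_dvd' (Nat.le_succ i)).mp h
  simp at this
  omega

lemma adj_rim (hk : 3 ≤ k) (i : ℕ) : (Wheel (2*k-1)).Adj (wv k i) (wv k (i+1)) := by
  rw [wv_def hk, wv_def hk, Wheel, fromRel_adj]
  refine ⟨by simp [Fin.ext_iff]; exact succ_mod_ne hk i, Or.inl ?_⟩
  show (i+1) % (2*k-1) = (i % (2*k-1) + 1) % (2*k-1)
  rw [Nat.mod_add_mod]

lemma spoke_mem (hk : 3 ≤ k) (i : ℕ) : spoke k i ∈ (Wheel (2*k-1)).edgeSet :=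
  (adj_none_wv hk i)

lemma rim_mem (hk : 3 ≤ k) (i : ℕ) : rim k i ∈ (Wheel (2*k-1)).edgeSet :=
  (adj_rim hk i)

lemma spoke_ne_rim (hk : 3 ≤ k) (i j : ℕ) : spoke k i ≠ rim k j := by
  intro h
  rw [spoke, rim, Sym2.eq_iff] at h
  rcases h with ⟨h1, _⟩ | ⟨h1, _⟩
  · exact wv_ne_none hk j h1.symm
  · exact wv_ne_none hk (j+1) h1.symm

lemma spoke_eq_iff (hk : 3 ≤ k) {i j : ℕ} :
    spoke k i = spoke k j ↔ i % (2*k-1) = j % (2*k-1) := by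
  rw [spoke, spoke, Sym2.eq_iff]
  constructor
  · rintro (⟨-, h⟩ | ⟨h, -⟩)
    · exact (wv_eq_iff hk).mp h
    · exact absurd h.symm (wv_ne_none hk j)
  · intro h
    exact Or.inl ⟨rfl, (wv_eq_iff hk).mpr h⟩

lemma rim_eq_iff (hk : 3 ≤ k) {i j : ℕ} :
    rim k i = rim k j ↔ i % (2*k-1) = j % (2*k-1) := by
  rw [rim, rim, Sym2.eq_iff]
  constructor
  · rintro (⟨h1, -⟩ | ⟨h1, h2⟩)
    · exact (wv_eq_iff hk).mp h1
    · exfalso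
      have e1 : i % (2*k-1) = (j+1) % (2*k-1) := (wv_eq_iff hk).mp h1
      have e2 : (i+1) % (2*k-1) = j % (2*k-1) := (wv_eq_iff hk).mp h2
      have e3 : (i+2) % (2*k-1) = (j+1) % (2*k-1) := by
        conv_lhs => rw [show i+2 = (i+1)+1 from rfl, ← Nat.mod_add_mod, e2, Nat.mod_add_mod]
      have e4 : (i+2) % (2*k-1) = i % (2*k-1) := by rw [e3, ← e1]
      have hd : (2*k-1) ∣ (i+2) - i := (Nat.modEq_iff_dvd' (by omega)).mp e4.symm
      have h2 : (i+2) - i = 2 := by omega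
      rw [h2] at hd
      have := Nat.le_of_dvd (by omega) hd
      omega
  · intro h
    refine Or.inl ⟨(wv_eq_iff hk).mpr h, (wv_eq_iff hk).mpr ?_⟩
    rw [← Nat.mod_add_mod, h, Nat.mod_add_mod]

lemma mem_edgeSet_iff (hk : 3 ≤ k) (e : Sym2 (VV k)) :
    e ∈ (Wheel (2*k-1)).edgeSet ↔
      (∃ i : Fin (2*k-1), e = spoke k i.val) ∨ (∃ i : Fin (2*k-1), e = rim k i.val) := by
  constructor
  · induction e using Sym2.ind with
    | _ u v =>
      intro h
      rw [mem_edgeSet, Wheel, fromRel_adj] at h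
      obtain ⟨hne, hrel⟩ := h
      match u, v with
      | none, none => simp [WheelRel] at hrel
      | none, some i =>
        exact Or.inl ⟨i, by rw [spoke, wv_fin hk]⟩
      | some i, none =>
        exact Or.inl ⟨i, by rw [spoke, wv_fin hk, Sym2.eq_swap]⟩
      | some i, some j =>
        rcases hrel with h | h
        · refine Or.inr ⟨i, ?_⟩
          rw [rim, wv_fin hk, wv_def hk]
          have : j = ⟨(i.val+1) % (2*k-1), Nat.mod_lt _ (by omega)⟩ := Fin.ext h
          rw [this]
        · refine Or.inr ⟨j, ?_⟩
          rw [rim, wv_fin hk, wv_def hk, Sym2.eq_swap]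
          have : i = ⟨(j.val+1) % (2*k-1), Nat.mod_lt _ (by omega)⟩ := Fin.ext h
          rw [this]
  · rintro (⟨i, rfl⟩ | ⟨i, rfl⟩)
    · exact spoke_mem hk _
    · exact rim_mem hk _

def pE (k j : ℕ) : Set (Sym2 (VV k)) :=
  {spoke k (2*j), spoke k (2*j+1), rim k (2*j+1), rim k (2*j+2)} ∪
    (if j = k-2 then {rim k (2*j+3)} else ∅)

lemma mem_pE_iff (k j : ℕ) (e : Sym2 (VV k)) : e ∈ pE k j ↔
    e = spoke k (2*j) ∨ e = spoke k (2*j+1) ∨ e = rim k (2*j+1) ∨ e = rim k (2*j+2) ∨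
      (j = k-2 ∧ e = rim k (2*j+3)) := by
  by_cases h : j = k-2 <;> simp [pE, h] <;> tauto

lemma pE_subset (hk : 3 ≤ k) (j : ℕ) : pE k j ⊆ (Wheel (2*k-1)).edgeSet := by
  intro e he
  rw [mem_pE_iff] at he
  rcases he with rfl | rfl | rfl | rfl | ⟨-, rfl⟩
  · exact spoke_mem hk _
  · exact spoke_mem hk _
  · exact rim_mem hk _
  · exact rim_mem hk _
  · exact rim_mem hk _

lemma spoke_not_diag (hk : 3 ≤ k) (i : ℕ) : ¬ (spoke k i).IsDiag := by
  rw [spoke, Sym2.isDiag_iff_proj_eq]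
  exact fun h => wv_ne_none hk i h.symm

lemma rim_not_diag (hk : 3 ≤ k) (i : ℕ) : ¬ (rim k i).IsDiag := by
  rw [rim, Sym2.isDiag_iff_proj_eq]
  intro h
  exact succ_mod_ne hk i ((wv_eq_iff hk).mp h)

lemma edgeSet_pE (hk : 3 ≤ k) (j : ℕ) :
    (SimpleGraph.fromEdgeSet (pE k j)).edgeSet = pE k j := by
  rw [edgeSet_fromEdgeSet]
  apply Set.Subset.antisymm Set.diff_subset
  intro e he
  refine ⟨he, fun hd => ?_⟩
  rw [mem_pE_iff] at he
  rcases he with rfl | rfl | rfl | rfl | ⟨-, rfl⟩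
  · exact spoke_not_diag hk _ hd
  · exact spoke_not_diag hk _ hd
  · exact rim_not_diag hk _ hd
  · exact rim_not_diag hk _ hd
  · exact rim_not_diag hk _ hd

lemma mod_eq_small (hk : 3 ≤ k) {a b : ℕ} (ha : a ≤ 2*k-1) (hb : b ≤ 2*k-1)
    (h : a % (2*k-1) = b % (2*k-1)) :
    a = b ∨ (a = 2*k-1 ∧ b = 0) ∨ (a = 0 ∧ b = 2*k-1) := by
  have h1 : a % (2*k-1) = if a = 2*k-1 then 0 else a := by
    split_ifs with h' 
    · simp [h']
    · exact Nat.mod_eq_of_lt (by omega)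
  have h2 : b % (2*k-1) = if b = 2*k-1 then 0 else b := by
    split_ifs with h'
    · simp [h']
    · exact Nat.mod_eq_of_lt (by omega)
  rw [h1, h2] at h
  split_ifs at h <;> omega

lemma pE_disj (hk : 3 ≤ k) {i j : ℕ} (hi : i ≤ k-2) (hj : j ≤ k-2) (hne : i ≠ j) :
    Disjoint (pE k i) (pE k j) := by
  rw [Set.disjoint_left]
  intro e he1 he2
  rw [mem_pE_iff] at he1 he2
  rcases he1 with rfl | rfl | rfl | rfl | ⟨hik, rfl⟩ <;>
    rcases he2 with h | h | h | h | ⟨hjk, h⟩ <;>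
    first
    | omega
    | (exact spoke_ne_rim hk _ _ h)
    | (exact spoke_ne_rim hk _ _ h.symm)
    | (rcases mod_eq_small hk (by omega) (by omega) ((spoke_eq_iff hk).mp h) with h' | h' | h' <;> omega)
    | (rcases mod_eq_small hk (by omega) (by omega) ((rim_eq_iff hk).mp h) with h' | h' | h' <;> omega)

lemma spoke_e_not_mem (hk : 3 ≤ k) {j : ℕ} (hj : j ≤ k-2) :
    spoke k (2*k-2) ∉ pE k j := by
  intro he
  rw [mem_pE_iff] at he
  rcases he with h | h | h | h | ⟨hjk, h⟩ <;>
    first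
    | (exact spoke_ne_rim hk _ _ h)
    | (rcases mod_eq_small hk (by omega) (by omega) ((spoke_eq_iff hk).mp h) with h' | h' | h' <;> omega)

lemma union_pE (hk : 3 ≤ k) :
    ((⋃ i : Fin (k-1), pE k i.val) ∪ {spoke k (2*k-2)}) = (Wheel (2*k-1)).edgeSet := by
  apply Set.Subset.antisymm
  · rintro e (he | he)
    · obtain ⟨i, hi⟩ := Set.mem_iUnion.mp he
      exact pE_subset hk _ hi
    · rw [he]
      exact spoke_mem hk _
  · intro e he
    rw [mem_edgeSet_iff hk] at he
    rcases he with ⟨i, rfl⟩ | ⟨i, rfl⟩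
    · by_cases hi : i.val = 2*k-2
      · right
        rw [hi]; rfl
      · left
        have hilt : i.val < 2*k-1 := i.isLt
        rw [Set.mem_iUnion]
        rcases Nat.even_or_odd i.val with ⟨t, ht⟩ | ⟨t, ht⟩
        · refine ⟨⟨t, by omega⟩, ?_⟩
          rw [mem_pE_iff]
          left
          show spoke k i.val = spoke k (2*t)
          congr 1
          try omega
        · refine ⟨⟨t, by omega⟩, ?_⟩
          rw [mem_pE_iff]
          right; left
          show spoke k i.val = spoke k (2*t+1)
          congr 1
          try omega
    · left
      have hilt : i.val < 2*k-1 := i.isLt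
      rw [Set.mem_iUnion]
      rcases Nat.even_or_odd i.val with ⟨t, ht⟩ | ⟨t, ht⟩
      · by_cases h0 : i.val = 0
        · refine ⟨⟨k-2, by omega⟩, ?_⟩
          rw [mem_pE_iff]
          right; right; right; right
          refine ⟨rfl, ?_⟩
          rw [rim_eq_iff hk]
          have h3 : 2*(k-2)+3 = 2*k-1 := by omega
          rw [h0, h3, Nat.mod_self, Nat.zero_mod]
        · refine ⟨⟨t-1, by omega⟩, ?_⟩
          rw [mem_pE_iff]
          right; right; right; left
          show rim k i.val = rim k (2*(t-1)+2)
          congr 1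
          try omega
      · refine ⟨⟨t, by omega⟩, ?_⟩
        rw [mem_pE_iff]
        right; right; left
        show rim k i.val = rim k (2*t+1)
        congr 1
        try omega
lemma wv_succ_ne (hk : 3 ≤ k) (i : ℕ) : wv k i ≠ wv k (i+1) := fun h =>
  succ_mod_ne hk i ((wv_eq_iff hk).mp h)

lemma wv_ne_of (hk : 3 ≤ k) {a b : ℕ} (ha : a < 2*k-1) (hb : b < 2*k-1) (h : a ≠ b) :
    wv k a ≠ wv k b := fun hh => h (wv_eq_of_lt hk ha hb hh)

lemma isPathGraph_pE (hk : 3 ≤ k) {j : ℕ} (hj : j ≤ k-2) :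
    Signed.IsPathGraph (SimpleGraph.fromEdgeSet (pE k j)) := by
  by_cases hsp : j = k-2
  · subst hsp
    have h3 : wv k (2*(k-2)+3) = wv k 0 := by
      rw [wv_eq_iff hk, show 2*(k-2)+3 = 2*k-1 by omega, Nat.mod_self, Nat.zero_mod]
    have h4 : wv k (2*(k-2)+4) = wv k 1 := by
      rw [wv_eq_iff hk, show 2*(k-2)+4 = (2*k-1)+1 by omega, Nat.add_mod_left]
    have h3' : wv k (2*(k-2)+2+1) = wv k 0 := h3
    have h4' : wv k (2*(k-2)+3+1) = wv k 1 := h4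
    have a1 : (SimpleGraph.fromEdgeSet (pE k (k-2))).Adj (wv k (2*(k-2))) none := by
      rw [fromEdgeSet_adj]
      exact ⟨by rw [Sym2.eq_swap]; rw [mem_pE_iff]; left; rfl, wv_ne_none hk _⟩
    have a2 : (SimpleGraph.fromEdgeSet (pE k (k-2))).Adj none (wv k (2*(k-2)+1)) := by
      rw [fromEdgeSet_adj]
      exact ⟨by rw [mem_pE_iff]; right; left; rfl, fun h => wv_ne_none hk _ h.symm⟩
    have a3 : (SimpleGraph.fromEdgeSet (pE k (k-2))).Adj (wv k (2*(k-2)+1)) (wv k (2*(k-2)+2)) := by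
      rw [fromEdgeSet_adj]
      exact ⟨by rw [mem_pE_iff]; right; right; left; rfl, wv_succ_ne hk _⟩
    have a4 : (SimpleGraph.fromEdgeSet (pE k (k-2))).Adj (wv k (2*(k-2)+2)) (wv k 0) := by
      rw [fromEdgeSet_adj]
      refine ⟨by rw [← h3, mem_pE_iff]; right; right; right; left; rfl, ?_⟩
      rw [← h3]; exact wv_succ_ne hk _
    have a5 : (SimpleGraph.fromEdgeSet (pE k (k-2))).Adj (wv k 0) (wv k 1) := by
      rw [fromEdgeSet_adj]
      refine ⟨?_, wv_succ_ne hk 0⟩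
      rw [mem_pE_iff]
      right; right; right; right
      exact ⟨by trivial, by rw [rim, h3, h4']⟩
    refine ⟨_, _, SimpleGraph.Walk.cons a1 (SimpleGraph.Walk.cons a2 (SimpleGraph.Walk.cons a3
      (SimpleGraph.Walk.cons a4 (SimpleGraph.Walk.cons a5 SimpleGraph.Walk.nil)))), ?_, ?_⟩
    · rw [SimpleGraph.Walk.isPath_def]
      simp only [SimpleGraph.Walk.support_cons, SimpleGraph.Walk.support_nil, List.nodup_cons,
        List.mem_cons, List.not_mem_nil, or_false, List.nodup_nil, and_true, not_or,
        List.mem_singleton]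
      refine ⟨⟨wv_ne_none hk _, wv_ne_of hk (by omega) (by omega) (by omega),
          wv_ne_of hk (by omega) (by omega) (by omega),
          wv_ne_of hk (by omega) (by omega) (by omega),
          wv_ne_of hk (by omega) (by omega) (by omega)⟩,
        ⟨(wv_ne_none hk _).symm, (wv_ne_none hk _).symm, (wv_ne_none hk _).symm,
          (wv_ne_none hk _).symm⟩,
        ⟨wv_ne_of hk (by omega) (by omega) (by omega),
          wv_ne_of hk (by omega) (by omega) (by omega),
          wv_ne_of hk (by omega) (by omega) (by omega)⟩,
        ⟨wv_ne_of hk (by omega) (by omega) (by omega),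
          wv_ne_of hk (by omega) (by omega) (by omega)⟩,
        wv_ne_of hk (by omega) (by omega) (by omega), not_false⟩
    · intro e
      rw [edgeSet_pE hk, mem_pE_iff]
      simp only [SimpleGraph.Walk.edges_cons, SimpleGraph.Walk.edges_nil, List.mem_cons,
        List.not_mem_nil, or_false]
      constructor
      · rintro (rfl | rfl | rfl | rfl | ⟨-, rfl⟩)
        · left; rw [spoke, Sym2.eq_swap]
        · right; left; rfl
        · right; right; left; rfl
        · right; right; right; left; rw [rim, h3']
        · right; right; right; right; rw [rim, h3, h4']
      · rintro (rfl | rfl | rfl | rfl | rfl)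
        · left; rw [spoke, Sym2.eq_swap]
        · right; left; rfl
        · right; right; left; rfl
        · right; right; right; left; rw [rim, h3']
        · right; right; right; right; exact ⟨by trivial, by rw [rim, h3, h4']⟩
  · have a1 : (SimpleGraph.fromEdgeSet (pE k j)).Adj (wv k (2*j)) none := by
      rw [fromEdgeSet_adj]
      exact ⟨by rw [Sym2.eq_swap]; rw [mem_pE_iff]; left; rfl, wv_ne_none hk _⟩
    have a2 : (SimpleGraph.fromEdgeSet (pE k j)).Adj none (wv k (2*j+1)) := by
      rw [fromEdgeSet_adj]
      exact ⟨by rw [mem_pE_iff]; right; left; rfl, fun h => wv_ne_none hk _ h.symm⟩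
    have a3 : (SimpleGraph.fromEdgeSet (pE k j)).Adj (wv k (2*j+1)) (wv k (2*j+2)) := by
      rw [fromEdgeSet_adj]
      exact ⟨by rw [mem_pE_iff]; right; right; left; rfl, wv_succ_ne hk _⟩
    have a4 : (SimpleGraph.fromEdgeSet (pE k j)).Adj (wv k (2*j+2)) (wv k (2*j+3)) := by
      rw [fromEdgeSet_adj]
      exact ⟨by rw [mem_pE_iff]; right; right; right; left; rfl, wv_succ_ne hk _⟩
    refine ⟨_, _, SimpleGraph.Walk.cons a1 (SimpleGraph.Walk.cons a2 (SimpleGraph.Walk.cons a3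
      (SimpleGraph.Walk.cons a4 SimpleGraph.Walk.nil))), ?_, ?_⟩
    · rw [SimpleGraph.Walk.isPath_def]
      simp only [SimpleGraph.Walk.support_cons, SimpleGraph.Walk.support_nil, List.nodup_cons,
        List.mem_cons, List.not_mem_nil, or_false, List.nodup_nil, and_true, not_or,
        List.mem_singleton]
      refine ⟨⟨wv_ne_none hk _, wv_ne_of hk (by omega) (by omega) (by omega),
          wv_ne_of hk (by omega) (by omega) (by omega),
          wv_ne_of hk (by omega) (by omega) (by omega)⟩,
        ⟨(wv_ne_none hk _).symm, (wv_ne_none hk _).symm, (wv_ne_none hk _).symm⟩,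
        ⟨wv_ne_of hk (by omega) (by omega) (by omega),
          wv_ne_of hk (by omega) (by omega) (by omega)⟩,
        wv_ne_of hk (by omega) (by omega) (by omega), not_false⟩
    · intro e
      rw [edgeSet_pE hk, mem_pE_iff]
      simp only [SimpleGraph.Walk.edges_cons, SimpleGraph.Walk.edges_nil, List.mem_cons,
        List.not_mem_nil, or_false]
      constructor
      · rintro (rfl | rfl | rfl | rfl | ⟨hc, rfl⟩)
        · left; rw [spoke, Sym2.eq_swap]
        · right; left; rfl
        · right; right; left; rfl
        · right; right; right; rfl
        · exact absurd hc hsp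
      · rintro (rfl | rfl | rfl | rfl)
        · left; rw [spoke, Sym2.eq_swap]
        · right; left; rfl
        · right; right; left; rfl
        · right; right; right; left; rfl
lemma adj_none_some (hk : 3 ≤ k) (i : Fin (2*k-1)) : (Wheel (2*k-1)).Adj none (some i) := by
  have := adj_none_wv hk i.val
  rwa [wv_fin hk] at this

lemma maxDeg_wheel' (hk : 3 ≤ k) [dec : DecidableRel (Wheel (2*k-1)).Adj] :
    (Wheel (2*k-1)).maxDegree = 2*k-1 := by
  apply le_antisymm
  · apply SimpleGraph.maxDegree_le_of_forall_degree_le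
    intro v
    have h := SimpleGraph.degree_lt_card_verts (G := Wheel (2*k-1)) v
    rw [Fintype.card_option, Fintype.card_fin] at h
    omega
  · have hfin : (Wheel (2*k-1)).neighborFinset none = ({none} : Finset (VV k))ᶜ := by
      ext v
      rw [SimpleGraph.mem_neighborFinset, Finset.mem_compl, Finset.mem_singleton]
      cases v with
      | none => simp
      | some i => simp [adj_none_some hk i]
    have hdeg : (Wheel (2*k-1)).degree none = 2*k-1 := by
      rw [← SimpleGraph.card_neighborFinset_eq_degree, hfin, Finset.card_compl,
        Finset.card_singleton, Fintype.card_option, Fintype.card_fin]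
      omega
    exact le_trans (le_of_eq hdeg.symm) (SimpleGraph.degree_le_maxDegree _ _)

lemma maxDeg_wheel (hk : 3 ≤ k) : Signed.maxDeg (Wheel (2*k-1)) = 2*k-1 := by
  unfold Signed.maxDeg
  exact @maxDeg_wheel' k hk (Classical.decRel _)

lemma colorSet_emb (n : ℕ) : ∃ g : ℤ → ℕ, (∀ x ∈ Signed.colorSet n, g x < n) ∧
    ∀ x ∈ Signed.colorSet n, ∀ y ∈ Signed.colorSet n, g x = g y → x = y := by
  refine ⟨fun x => if x = 0 then n-1 else if 0 < x then (2*(x-1)).toNat else 2*x.natAbs - 1,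
    ?_, ?_⟩
  · intro x hx
    obtain ⟨hx1, hx2⟩ := hx
    dsimp only
    by_cases h0 : x = 0
    · rw [if_pos h0]
      rcases Nat.even_or_odd n with he | ho
      · exact absurd h0 (hx2 he)
      · obtain ⟨t, rfl⟩ := ho
        omega
    · rw [if_neg h0]
      by_cases hp : 0 < x
      · rw [if_pos hp]; omega
      · rw [if_neg hp]; omega
  · intro x hx y hy h
    obtain ⟨hx1, hx2⟩ := hx
    obtain ⟨hy1, hy2⟩ := hy
    dsimp only at h
    by_cases hx0 : x = 0 <;> by_cases hy0 : y = 0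
    · rw [hx0, hy0]
    · rw [if_pos hx0, if_neg hy0] at h
      by_cases hyp : 0 < y
      · rw [if_pos hyp] at h; omega
      · rw [if_neg hyp] at h
        exact absurd hx0 (hx2 ⟨y.natAbs, by omega⟩)
    · rw [if_neg hx0, if_pos hy0] at h
      by_cases hxp : 0 < x
      · rw [if_pos hxp] at h; omega
      · rw [if_neg hxp] at h
        exact absurd hy0 (hy2 ⟨x.natAbs, by omega⟩)
    · rw [if_neg hx0, if_neg hy0] at h
      by_cases hxp : 0 < x <;> by_cases hyp : 0 < y
      · rw [if_pos hxp, if_pos hyp] at h; omega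
      · rw [if_pos hxp, if_neg hyp] at h; omega
      · rw [if_neg hxp, if_pos hyp] at h; omega
      · rw [if_neg hxp, if_neg hyp] at h; omega

lemma colorable_lower (hk : 3 ≤ k) (σ : Sym2 (VV k) → ℤ) (n : ℕ)
    (h : Signed.Colorable (Wheel (2*k-1)) σ n) : 2*k-1 ≤ n := by
  obtain ⟨f, hf1, hf2, hf3⟩ := h
  obtain ⟨g, hglt, hginj⟩ := colorSet_emb n
  have key : Function.Injective (fun i : Fin (2*k-1) =>
      (⟨g (f none s(none, some i)), hglt _ (hf1 none (some i) (adj_none_some hk i))⟩ : Fin n)) := by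
    intro i i' hii
    by_contra hne
    have hne' : (some i : VV k) ≠ some i' := by simp [hne]
    have h3 := hf3 none (some i) (some i') (adj_none_some hk i) (adj_none_some hk i') hne'
    exact h3 (hginj _ (hf1 none (some i) (adj_none_some hk i)) _
      (hf1 none (some i') (adj_none_some hk i')) (by simpa using hii))
  have := Fintype.card_le_of_injective _ key
  simpa using this
def cc (j : ℕ) : ℤ := (j : ℤ) + 1

def sA (k : ℕ) (σ : Sym2 (VV k) → ℤ) (j : ℕ) : ℤ := σ (spoke k (2*j))
def sB (k : ℕ) (σ : Sym2 (VV k) → ℤ) (j : ℕ) : ℤ := σ (spoke k (2*j+1))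
def sC (k : ℕ) (σ : Sym2 (VV k) → ℤ) (j : ℕ) : ℤ := σ (rim k (2*j+1))
def sD (k : ℕ) (σ : Sym2 (VV k) → ℤ) (j : ℕ) : ℤ := σ (rim k (2*j+2))
def sE (k : ℕ) (σ : Sym2 (VV k) → ℤ) : ℤ := σ (rim k (2*k-1))

def spokeCol (k : ℕ) (σ : Sym2 (VV k) → ℤ) (u : VV k) (i : Fin (2*k-1)) : ℤ :=
  if i.val = 2*k-2 then 0
  else if i.val % 2 = 0 then
    (if u = some i then 1 else if u = none then -(sA k σ (i.val/2)) else 0) * cc (i.val/2)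
  else
    (if u = none then sA k σ (i.val/2)
     else if u = some i then -(sA k σ (i.val/2) * sB k σ (i.val/2)) else 0) * cc (i.val/2)

def rimCol (k : ℕ) (σ : Sym2 (VV k) → ℤ) (u : VV k) (i : Fin (2*k-1)) : ℤ :=
  if i.val % 2 = 1 then
    (if u = some i then sA k σ (i.val/2) * sB k σ (i.val/2)
     else if u = wv k (i.val+1) then
       -(sA k σ (i.val/2) * sB k σ (i.val/2) * sC k σ (i.val/2)) else 0) * cc (i.val/2)
  else if i.val = 0 then
    (if u = some i then sA k σ (k-2) * sB k σ (k-2) * sC k σ (k-2) * sD k σ (k-2)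
     else if u = wv k 1 then
       -(sA k σ (k-2) * sB k σ (k-2) * sC k σ (k-2) * sD k σ (k-2) * sE k σ) else 0) * cc (k-2)
  else
    (if u = some i then sA k σ (i.val/2-1) * sB k σ (i.val/2-1) * sC k σ (i.val/2-1)
     else if u = wv k (i.val+1) then
       -(sA k σ (i.val/2-1) * sB k σ (i.val/2-1) * sC k σ (i.val/2-1) * sD k σ (i.val/2-1))
     else 0) * cc (i.val/2-1)

def ha (k : ℕ) (σ : Sym2 (VV k) → ℤ) (u : VV k) : VV k → VV k → ℤ
  | none, some i => spokeCol k σ u i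
  | some i, some i' =>
      if i'.val = (i.val + 1) % (2*k-1) ∧ ¬ i.val = (i'.val + 1) % (2*k-1)
      then rimCol k σ u i else 0
  | _, _ => 0

def fcol (k : ℕ) (σ : Sym2 (VV k) → ℤ) (u : VV k) : Sym2 (VV k) → ℤ :=
  Sym2.lift ⟨fun a b => ha k σ u a b + ha k σ u b a, fun a b => by ring⟩

variable {σ : Sym2 (VV k) → ℤ}

lemma not_both_succ (hk : 3 ≤ k) {a b : ℕ} (h1 : b % (2*k-1) = (a+1) % (2*k-1))
    (h2 : a % (2*k-1) = (b+1) % (2*k-1)) : False := by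
  have e3 : (a+2) % (2*k-1) = (b+1) % (2*k-1) := by
    conv_lhs => rw [show a+2 = (a+1)+1 from rfl, ← Nat.mod_add_mod, ← h1, Nat.mod_add_mod]
  have e4 : (a+2) % (2*k-1) = a % (2*k-1) := by rw [e3, ← h2]
  have hd : (2*k-1) ∣ (a+2) - a := (Nat.modEq_iff_dvd' (by omega)).mp e4.symm
  rw [show (a+2) - a = 2 by omega] at hd
  have := Nat.le_of_dvd (by omega) hd
  omega

lemma fcol_spoke (u : VV k) (i : Fin (2*k-1)) :
    fcol k σ u s(none, some i) = spokeCol k σ u i := by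
  show ha k σ u none (some i) + ha k σ u (some i) none = _
  rw [show ha k σ u none (some i) = spokeCol k σ u i from rfl,
    show ha k σ u (some i) none = 0 from rfl, add_zero]

lemma fcol_rim (hk : 3 ≤ k) (u : VV k) (i i' : Fin (2*k-1))
    (hii : i'.val = (i.val + 1) % (2*k-1)) :
    fcol k σ u s(some i, some i') = rimCol k σ u i := by
  have hrev : ¬ i.val = (i'.val + 1) % (2*k-1) := fun h =>
    not_both_succ hk (by rw [Nat.mod_eq_of_lt i'.isLt]; exact hii)
      (by rw [Nat.mod_eq_of_lt i.isLt]; exact h)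
  show ha k σ u (some i) (some i') + ha k σ u (some i') (some i) = _
  rw [show ha k σ u (some i) (some i')
      = if i'.val = (i.val + 1) % (2*k-1) ∧ ¬ i.val = (i'.val + 1) % (2*k-1)
        then rimCol k σ u i else 0 from rfl,
    show ha k σ u (some i') (some i)
      = if i.val = (i'.val + 1) % (2*k-1) ∧ ¬ i'.val = (i.val + 1) % (2*k-1)
        then rimCol k σ u i' else 0 from rfl,
    if_pos ⟨hii, hrev⟩, if_neg (fun hc => hrev hc.1), add_zero]

lemma fcol_rim' (hk : 3 ≤ k) (u : VV k) (p : ℕ) :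
    fcol k σ u s(wv k p, wv k (p+1)) = rimCol k σ u ⟨p % (2*k-1), Nat.mod_lt _ (by omega)⟩ := by
  rw [wv_def hk, wv_def hk]
  exact fcol_rim hk u _ _ (by simp [Nat.mod_add_mod])

def IsSign (x : ℤ) : Prop := x = 1 ∨ x = -1

lemma IsSign.mul {x y : ℤ} (hx : IsSign x) (hy : IsSign y) : IsSign (x*y) := by
  rcases hx with rfl | rfl <;> rcases hy with rfl | rfl <;> simp [IsSign]

lemma IsSign.neg {x : ℤ} (hx : IsSign x) : IsSign (-x) := by
  rcases hx with rfl | rfl <;> simp [IsSign]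

lemma IsSign.ne_zero {x : ℤ} (hx : IsSign x) : x ≠ 0 := by
  rcases hx with rfl | rfl <;> simp

lemma IsSign.natAbs {x : ℤ} (hx : IsSign x) : x.natAbs = 1 := by
  rcases hx with rfl | rfl <;> simp

lemma sign_mul_cc_natAbs {x : ℤ} (hx : IsSign x) (j : ℕ) : (x * cc j).natAbs = j + 1 := by
  rw [Int.natAbs_mul, hx.natAbs, one_mul, cc]
  omega

lemma mem_colorSet (hk : 3 ≤ k) {x : ℤ} (hx : IsSign x) {j : ℕ} (hj : j ≤ k-2) :
    x * cc j ∈ Signed.colorSet (2*k-1) := by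
  constructor
  · rw [sign_mul_cc_natAbs hx]
    omega
  · intro he
    rw [Nat.even_iff] at he
    omega

lemma zero_mem_colorSet (hk : 3 ≤ k) : (0 : ℤ) ∈ Signed.colorSet (2*k-1) := by
  constructor
  · simp
  · intro he
    rw [Nat.even_iff] at he
    omega

lemma hsA (hk : 3 ≤ k) (hσ : Signed.IsSignature (Wheel (2*k-1)) σ) (j : ℕ) :
    IsSign (sA k σ j) := hσ _ (spoke_mem hk _)
lemma hsB (hk : 3 ≤ k) (hσ : Signed.IsSignature (Wheel (2*k-1)) σ) (j : ℕ) :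
    IsSign (sB k σ j) := hσ _ (spoke_mem hk _)
lemma hsC (hk : 3 ≤ k) (hσ : Signed.IsSignature (Wheel (2*k-1)) σ) (j : ℕ) :
    IsSign (sC k σ j) := hσ _ (rim_mem hk _)
lemma hsD (hk : 3 ≤ k) (hσ : Signed.IsSignature (Wheel (2*k-1)) σ) (j : ℕ) :
    IsSign (sD k σ j) := hσ _ (rim_mem hk _)
lemma hsE (hk : 3 ≤ k) (hσ : Signed.IsSignature (Wheel (2*k-1)) σ) :
    IsSign (sE k σ) := hσ _ (rim_mem hk _)
lemma fin_val_mk {n a : ℕ} (h : a < n) : ((⟨a, h⟩ : Fin n)).val = a := rfl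

lemma wv_succ_ne_some (hk : 3 ≤ k) (i : Fin (2*k-1)) : wv k (i.val+1) ≠ some i := by
  rw [wv_def hk]
  intro h
  rw [Option.some_inj, Fin.ext_iff, fin_val_mk] at h
  exact succ_mod_ne hk i.val (by rw [Nat.mod_eq_of_lt i.isLt, h])

lemma wv_one_ne_some (hk : 3 ≤ k) (i : Fin (2*k-1)) (h0 : i.val = 0) : wv k 1 ≠ some i := by
  rw [wv_def hk]
  intro h
  rw [Option.some_inj, Fin.ext_iff, fin_val_mk, Nat.mod_eq_of_lt (by omega), h0] at h
  omega

-- spokeCol values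
lemma sc_none_last (i : Fin (2*k-1)) (h : i.val = 2*k-2) : spokeCol k σ none i = 0 := by
  rw [spokeCol, if_pos h]

lemma sc_none_even (i : Fin (2*k-1)) (h : ¬ i.val = 2*k-2) (he : i.val % 2 = 0) :
    spokeCol k σ none i = -(sA k σ (i.val/2)) * cc (i.val/2) := by
  rw [spokeCol, if_neg h, if_pos he, if_neg (by simp), if_pos rfl]

lemma sc_none_odd (i : Fin (2*k-1)) (h : ¬ i.val = 2*k-2) (ho : i.val % 2 = 1) :
    spokeCol k σ none i = sA k σ (i.val/2) * cc (i.val/2) := by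
  rw [spokeCol, if_neg h, if_neg (by omega), if_pos rfl]

lemma sc_self_last (i : Fin (2*k-1)) (h : i.val = 2*k-2) : spokeCol k σ (some i) i = 0 := by
  rw [spokeCol, if_pos h]

lemma sc_self_even (i : Fin (2*k-1)) (h : ¬ i.val = 2*k-2) (he : i.val % 2 = 0) :
    spokeCol k σ (some i) i = 1 * cc (i.val/2) := by
  rw [spokeCol, if_neg h, if_pos he, if_pos rfl]

lemma sc_self_odd (i : Fin (2*k-1)) (h : ¬ i.val = 2*k-2) (ho : i.val % 2 = 1) :
    spokeCol k σ (some i) i = -(sA k σ (i.val/2) * sB k σ (i.val/2)) * cc (i.val/2) := by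
  rw [spokeCol, if_neg h, if_neg (by omega), if_neg (by simp), if_pos rfl]

-- rimCol values at first endpoint
lemma rc_self_odd (i : Fin (2*k-1)) (ho : i.val % 2 = 1) :
    rimCol k σ (some i) i = (sA k σ (i.val/2) * sB k σ (i.val/2)) * cc (i.val/2) := by
  rw [rimCol, if_pos ho, if_pos rfl]

lemma rc_self_zero (i : Fin (2*k-1)) (h0 : i.val = 0) :
    rimCol k σ (some i) i
      = (sA k σ (k-2) * sB k σ (k-2) * sC k σ (k-2) * sD k σ (k-2)) * cc (k-2) := by
  rw [rimCol, if_neg (by omega), if_pos h0, if_pos rfl]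

lemma rc_self_even (i : Fin (2*k-1)) (he : i.val % 2 = 0) (h0 : ¬ i.val = 0) :
    rimCol k σ (some i) i
      = (sA k σ (i.val/2-1) * sB k σ (i.val/2-1) * sC k σ (i.val/2-1)) * cc (i.val/2-1) := by
  rw [rimCol, if_neg (by omega), if_neg h0, if_pos rfl]

-- rimCol values at second endpoint
lemma rc_next_odd (hk : 3 ≤ k) (i : Fin (2*k-1)) (ho : i.val % 2 = 1) :
    rimCol k σ (wv k (i.val+1)) i
      = -(sA k σ (i.val/2) * sB k σ (i.val/2) * sC k σ (i.val/2)) * cc (i.val/2) := by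
  rw [rimCol, if_pos ho, if_neg (wv_succ_ne_some hk i), if_pos rfl]

lemma rc_next_zero (hk : 3 ≤ k) (i : Fin (2*k-1)) (h0 : i.val = 0) :
    rimCol k σ (wv k 1) i
      = -(sA k σ (k-2) * sB k σ (k-2) * sC k σ (k-2) * sD k σ (k-2) * sE k σ) * cc (k-2) := by
  rw [rimCol, if_neg (by omega), if_pos h0, if_neg (wv_one_ne_some hk i h0), if_pos rfl]

lemma rc_next_even (hk : 3 ≤ k) (i : Fin (2*k-1)) (he : i.val % 2 = 0) (h0 : ¬ i.val = 0) :
    rimCol k σ (wv k (i.val+1)) i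
      = -(sA k σ (i.val/2-1) * sB k σ (i.val/2-1) * sC k σ (i.val/2-1) * sD k σ (i.val/2-1))
        * cc (i.val/2-1) := by
  rw [rimCol, if_neg (by omega), if_neg h0, if_neg (wv_succ_ne_some hk i), if_pos rfl]

-- sigma rewrites
lemma sigma_spoke (hk : 3 ≤ k) (i : Fin (2*k-1)) :
    σ s(none, some i) = σ (spoke k i.val) := by rw [← wv_fin hk i]; rfl

lemma sigma_spoke_even (hk : 3 ≤ k) (i : Fin (2*k-1)) (he : i.val % 2 = 0) :
    σ s(none, some i) = sA k σ (i.val/2) := by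
  rw [sigma_spoke (σ := σ) hk i, sA]
  congr 2
  omega

lemma sigma_spoke_odd (hk : 3 ≤ k) (i : Fin (2*k-1)) (ho : i.val % 2 = 1) :
    σ s(none, some i) = sB k σ (i.val/2) := by
  rw [sigma_spoke (σ := σ) hk i, sB]
  congr 2
  omega

lemma wv_of_next (hk : 3 ≤ k) {i i' : Fin (2*k-1)} (hii : i'.val = (i.val + 1) % (2*k-1)) :
    wv k (i.val+1) = some i' := by
  rw [wv_def hk]
  exact congrArg some (Fin.ext hii.symm)

lemma sigma_rim (hk : 3 ≤ k) (i i' : Fin (2*k-1)) (hii : i'.val = (i.val + 1) % (2*k-1)) :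
    σ s(some i, some i') = σ (rim k i.val) := by
  rw [← wv_fin hk i, ← wv_of_next hk hii]; rfl

lemma sigma_rim_odd (hk : 3 ≤ k) (i : Fin (2*k-1)) (ho : i.val % 2 = 1) :
    σ (rim k i.val) = sC k σ (i.val/2) := by
  rw [sC]; congr 2; omega

lemma sigma_rim_even (hk : 3 ≤ k) (i : Fin (2*k-1)) (he : i.val % 2 = 0) (h0 : ¬ i.val = 0) :
    σ (rim k i.val) = sD k σ (i.val/2-1) := by
  rw [sD]; congr 2; omega

lemma sigma_rim_zero (hk : 3 ≤ k) (i : Fin (2*k-1)) (h0 : i.val = 0) :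
    σ (rim k i.val) = sE k σ := by
  rw [sE]
  congr 1
  rw [rim_eq_iff hk, h0, Nat.zero_mod, Nat.mod_self]

-- inequality helpers
lemma cc_ne_zero (j : ℕ) : cc j ≠ 0 := by rw [cc]; omega

lemma cc_pos (j : ℕ) : 0 < cc j := by rw [cc]; omega

lemma sign_cc_ne {x y : ℤ} (hx : IsSign x) (hy : IsSign y) {j j' : ℕ} (h : j ≠ j') :
    x * cc j ≠ y * cc j' := fun hh => h (by
  have := congrArg Int.natAbs hh
  rw [sign_mul_cc_natAbs hx, sign_mul_cc_natAbs hy] at this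
  omega)

lemma sign_cc_ne_zero {x : ℤ} (hx : IsSign x) (j : ℕ) : x * cc j ≠ 0 :=
  mul_ne_zero hx.ne_zero (cc_ne_zero j)

lemma neg_sign_cc_ne {x : ℤ} (hx : IsSign x) (j : ℕ) : -x * cc j ≠ x * cc j := by
  rcases hx with rfl | rfl <;> rw [cc] <;> intro h <;> omega
lemma adj_elim (hk : 3 ≤ k) {u v : VV k} (h : (Wheel (2*k-1)).Adj u v) :
    (u = none ∧ ∃ i : Fin (2*k-1), v = some i) ∨
    (v = none ∧ ∃ i : Fin (2*k-1), u = some i) ∨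
    (∃ i i' : Fin (2*k-1), u = some i ∧ v = some i' ∧
      (i'.val = (i.val+1) % (2*k-1) ∨ i.val = (i'.val+1) % (2*k-1))) := by
  rw [Wheel, fromRel_adj] at h
  obtain ⟨hne, hrel⟩ := h
  match u, v with
  | none, none => exact absurd rfl hne
  | none, some i => exact Or.inl ⟨rfl, i, rfl⟩
  | some i, none => exact Or.inr (Or.inl ⟨rfl, i, rfl⟩)
  | some i, some i' =>
    refine Or.inr (Or.inr ⟨i, i', rfl, rfl, ?_⟩)
    rcases hrel with h | h
    · exact Or.inl h
    · exact Or.inr h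

lemma cond2 (hk : 3 ≤ k) (hσ : Signed.IsSignature (Wheel (2*k-1)) σ) :
    ∀ u v, (Wheel (2*k-1)).Adj u v →
      fcol k σ u s(u, v) = - σ s(u, v) * fcol k σ v s(u, v) := by
  intro u v hadj
  rcases adj_elim hk hadj with ⟨rfl, i, rfl⟩ | ⟨rfl, i, rfl⟩ | ⟨i, i', rfl, rfl, hii | hii⟩
  · -- center to rim
    rw [fcol_spoke, fcol_spoke]
    by_cases hl : i.val = 2*k-2
    · rw [sc_none_last i hl, sc_self_last i hl]; ring
    · rcases Nat.even_or_odd i.val with he | ho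
      · rw [Nat.even_iff] at he
        rw [sc_none_even i hl he, sc_self_even i hl he, sigma_spoke_even (σ := σ) hk i he]
        rcases hsA hk hσ (i.val/2) with h | h <;> rw [h] <;> ring
      · rw [Nat.odd_iff] at ho
        rw [sc_none_odd i hl ho, sc_self_odd i hl ho, sigma_spoke_odd (σ := σ) hk i ho]
        rcases hsB hk hσ (i.val/2) with h | h <;> rw [h] <;> ring
  · -- rim to center
    rw [Sym2.eq_swap (a := (some i : VV k)) (b := (none : VV k))]
    rw [fcol_spoke, fcol_spoke]
    by_cases hl : i.val = 2*k-2
    · rw [sc_none_last i hl, sc_self_last i hl]; ring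
    · rcases Nat.even_or_odd i.val with he | ho
      · rw [Nat.even_iff] at he
        rw [sc_none_even i hl he, sc_self_even i hl he, sigma_spoke_even (σ := σ) hk i he]
        rcases hsA hk hσ (i.val/2) with h | h <;> rw [h] <;> ring
      · rw [Nat.odd_iff] at ho
        rw [sc_none_odd i hl ho, sc_self_odd i hl ho, sigma_spoke_odd (σ := σ) hk i ho]
        rcases hsB hk hσ (i.val/2) with h | h <;> rw [h] <;> ring
  · -- rim edge, forward
    rw [fcol_rim hk _ _ _ hii, fcol_rim hk _ _ _ hii, sigma_rim (σ := σ) hk i i' hii,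
      ← wv_of_next hk hii]
    rcases Nat.even_or_odd i.val with he | ho
    · rw [Nat.even_iff] at he
      by_cases h0 : i.val = 0
      · have h1 : wv k (i.val + 1) = wv k 1 := by rw [h0]
        rw [h1, rc_self_zero i h0, rc_next_zero hk i h0, sigma_rim_zero (σ := σ) hk i h0]
        rcases hsE hk hσ with h | h <;> rw [h] <;> ring
      · rw [rc_self_even i he h0, rc_next_even hk i he h0, sigma_rim_even (σ := σ) hk i he h0]
        rcases hsD hk hσ (i.val/2-1) with h | h <;> rw [h] <;> ring
    · rw [Nat.odd_iff] at ho
      rw [rc_self_odd i ho, rc_next_odd hk i ho, sigma_rim_odd (σ := σ) hk i ho]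
      rcases hsC hk hσ (i.val/2) with h | h <;> rw [h] <;> ring
  · -- rim edge, backward
    rw [Sym2.eq_swap (a := (some i : VV k)) (b := (some i' : VV k))]
    rw [fcol_rim hk _ _ _ hii, fcol_rim hk _ _ _ hii, sigma_rim (σ := σ) hk i' i hii,
      ← wv_of_next hk hii]
    rcases Nat.even_or_odd i'.val with he | ho
    · rw [Nat.even_iff] at he
      by_cases h0 : i'.val = 0
      · have h1 : wv k (i'.val + 1) = wv k 1 := by rw [h0]
        rw [h1, rc_self_zero i' h0, rc_next_zero hk i' h0, sigma_rim_zero (σ := σ) hk i' h0]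
        rcases hsE hk hσ with h | h <;> rw [h] <;> ring
      · rw [rc_self_even i' he h0, rc_next_even hk i' he h0, sigma_rim_even (σ := σ) hk i' he h0]
        rcases hsD hk hσ (i'.val/2-1) with h | h <;> rw [h] <;> ring
    · rw [Nat.odd_iff] at ho
      rw [rc_self_odd i' ho, rc_next_odd hk i' ho, sigma_rim_odd (σ := σ) hk i' ho]
      rcases hsC hk hσ (i'.val/2) with h | h <;> rw [h] <;> ring

lemma cond1 (hk : 3 ≤ k) (hσ : Signed.IsSignature (Wheel (2*k-1)) σ) :
    ∀ u v, (Wheel (2*k-1)).Adj u v → fcol k σ u s(u, v) ∈ Signed.colorSet (2*k-1) := by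
  have one : IsSign (1 : ℤ) := Or.inl rfl
  intro u v hadj
  rcases adj_elim hk hadj with ⟨rfl, i, rfl⟩ | ⟨rfl, i, rfl⟩ | ⟨i, i', rfl, rfl, hii | hii⟩
  · rw [fcol_spoke]
    by_cases hl : i.val = 2*k-2
    · rw [sc_none_last i hl]; exact zero_mem_colorSet hk
    · rcases Nat.even_or_odd i.val with he | ho
      · rw [Nat.even_iff] at he
        rw [sc_none_even i hl he]
        exact mem_colorSet hk (hsA hk hσ _).neg (by omega)
      · rw [Nat.odd_iff] at ho
        rw [sc_none_odd i hl ho]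
        exact mem_colorSet hk (hsA hk hσ _) (by omega)
  · rw [Sym2.eq_swap (a := (some i : VV k)) (b := (none : VV k)), fcol_spoke]
    by_cases hl : i.val = 2*k-2
    · rw [sc_self_last i hl]; exact zero_mem_colorSet hk
    · rcases Nat.even_or_odd i.val with he | ho
      · rw [Nat.even_iff] at he
        rw [sc_self_even i hl he]
        exact mem_colorSet hk one (by omega)
      · rw [Nat.odd_iff] at ho
        rw [sc_self_odd i hl ho]
        exact mem_colorSet hk ((hsA hk hσ _).mul (hsB hk hσ _)).neg (by omega)
  · rw [fcol_rim hk _ _ _ hii]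
    rcases Nat.even_or_odd i.val with he | ho
    · rw [Nat.even_iff] at he
      by_cases h0 : i.val = 0
      · rw [rc_self_zero i h0]
        exact mem_colorSet hk
          ((((hsA hk hσ _).mul (hsB hk hσ _)).mul (hsC hk hσ _)).mul (hsD hk hσ _)) (by omega)
      · rw [rc_self_even i he h0]
        exact mem_colorSet hk (((hsA hk hσ _).mul (hsB hk hσ _)).mul (hsC hk hσ _))
          (by have := i.isLt; omega)
    · rw [Nat.odd_iff] at ho
      rw [rc_self_odd i ho]
      exact mem_colorSet hk ((hsA hk hσ _).mul (hsB hk hσ _)) (by have := i.isLt; omega)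
  · rw [Sym2.eq_swap (a := (some i : VV k)) (b := (some i' : VV k)), fcol_rim hk _ _ _ hii,
      ← wv_of_next hk hii]
    rcases Nat.even_or_odd i'.val with he | ho
    · rw [Nat.even_iff] at he
      by_cases h0 : i'.val = 0
      · have h1 : wv k 1 = wv k (i'.val + 1) := by rw [h0]
        rw [← h1, rc_next_zero hk i' h0]
        exact mem_colorSet hk
          (((((hsA hk hσ _).mul (hsB hk hσ _)).mul (hsC hk hσ _)).mul (hsD hk hσ _)).mul
            (hsE hk hσ)).neg (by omega)
      · rw [rc_next_even hk i' he h0]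
        exact mem_colorSet hk
          ((((hsA hk hσ _).mul (hsB hk hσ _)).mul (hsC hk hσ _)).mul (hsD hk hσ _)).neg
          (by have := i'.isLt; omega)
    · rw [Nat.odd_iff] at ho
      rw [rc_next_odd hk i' ho]
      exact mem_colorSet hk (((hsA hk hσ _).mul (hsB hk hσ _)).mul (hsC hk hσ _)).neg
        (by have := i'.isLt; omega)
lemma adj_none_elim (hk : 3 ≤ k) {x : VV k} (h : (Wheel (2*k-1)).Adj none x) :
    ∃ i, x = some i := by
  rcases adj_elim hk h with ⟨-, i, rfl⟩ | ⟨-, i, hi⟩ | ⟨i, i', hi, -, -⟩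
  · exact ⟨i, rfl⟩
  · exact absurd hi (by simp)
  · exact absurd hi (by simp)

lemma nbhd (hk : 3 ≤ k) {i : Fin (2*k-1)} {x : VV k} (h : (Wheel (2*k-1)).Adj (some i) x) :
    x = none ∨ x = wv k (i.val+1) ∨ x = wv k (i.val + (2*k-2)) := by
  rcases adj_elim hk h with ⟨h0, -⟩ | ⟨rfl, -⟩ | ⟨a, a', ha, rfl, hd | hd⟩
  · exact absurd h0 (by simp)
  · exact Or.inl rfl
  · rw [Option.some_inj] at ha
    subst ha
    exact Or.inr (Or.inl (wv_of_next hk hd).symm)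
  · rw [Option.some_inj] at ha
    subst ha
    right; right
    rw [← wv_fin hk a', wv_eq_iff hk, hd, Nat.mod_add_mod,
      show a'.val + 1 + (2*k-2) = a'.val + (2*k-1) by omega, Nat.add_mod_right]

lemma cond3 (hk : 3 ≤ k) (hσ : Signed.IsSignature (Wheel (2*k-1)) σ) :
    ∀ u v w, (Wheel (2*k-1)).Adj u v → (Wheel (2*k-1)).Adj u w → v ≠ w →
      fcol k σ u s(u, v) ≠ fcol k σ u s(u, w) := by
  have one : IsSign (1 : ℤ) := Or.inl rfl
  intro u v w huv huw hvw
  cases u with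
  | none =>
    obtain ⟨i, rfl⟩ := adj_none_elim hk huv
    obtain ⟨i', rfl⟩ := adj_none_elim hk huw
    have hne : i ≠ i' := fun h => hvw (by rw [h])
    have hvv : i.val ≠ i'.val := fun h => hne (Fin.ext h)
    rw [fcol_spoke, fcol_spoke]
    by_cases hl : i.val = 2*k-2 <;> by_cases hl' : i'.val = 2*k-2
    · exact absurd (Fin.ext (hl.trans hl'.symm)) hne
    · rw [sc_none_last i hl]
      rcases Nat.even_or_odd i'.val with he | ho
      · rw [Nat.even_iff] at he
        rw [sc_none_even i' hl' he]
        exact (sign_cc_ne_zero (hsA hk hσ _).neg _).symm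
      · rw [Nat.odd_iff] at ho
        rw [sc_none_odd i' hl' ho]
        exact (sign_cc_ne_zero (hsA hk hσ _) _).symm
    · rw [sc_none_last i' hl']
      rcases Nat.even_or_odd i.val with he | ho
      · rw [Nat.even_iff] at he
        rw [sc_none_even i hl he]
        exact sign_cc_ne_zero (hsA hk hσ _).neg _
      · rw [Nat.odd_iff] at ho
        rw [sc_none_odd i hl ho]
        exact sign_cc_ne_zero (hsA hk hσ _) _
    · rcases Nat.even_or_odd i.val with he | ho <;> rcases Nat.even_or_odd i'.val with he' | ho'
      · rw [Nat.even_iff] at he; rw [Nat.even_iff] at he'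
        rw [sc_none_even i hl he, sc_none_even i' hl' he']
        exact sign_cc_ne (hsA hk hσ _).neg (hsA hk hσ _).neg (by omega)
      · rw [Nat.even_iff] at he; rw [Nat.odd_iff] at ho'
        rw [sc_none_even i hl he, sc_none_odd i' hl' ho']
        by_cases hj : i.val/2 = i'.val/2
        · rw [hj]
          exact neg_sign_cc_ne (hsA hk hσ _) _
        · exact sign_cc_ne (hsA hk hσ _).neg (hsA hk hσ _) hj
      · rw [Nat.odd_iff] at ho; rw [Nat.even_iff] at he'
        rw [sc_none_odd i hl ho, sc_none_even i' hl' he']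
        by_cases hj : i.val/2 = i'.val/2
        · rw [hj]
          exact (neg_sign_cc_ne (hsA hk hσ _) _).symm
        · exact sign_cc_ne (hsA hk hσ _) (hsA hk hσ _).neg hj
      · rw [Nat.odd_iff] at ho; rw [Nat.odd_iff] at ho'
        rw [sc_none_odd i hl ho, sc_none_odd i' hl' ho']
        exact sign_cc_ne (hsA hk hσ _) (hsA hk hσ _) (by omega)
  | some i =>
    obtain ⟨i₀, hIv⟩ : ∃ i₀ : Fin (2*k-1), i₀.val = (i.val + (2*k-2)) % (2*k-1) :=
      ⟨⟨_, Nat.mod_lt _ (by omega)⟩, rfl⟩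
    have hp1 : wv k ((i.val + (2*k-2)) + 1) = some i := by
      rw [← wv_fin hk i, wv_eq_iff hk,
        show i.val + (2*k-2) + 1 = i.val + (2*k-1) by omega, Nat.add_mod_right]
    have hnext : wv k (i₀.val + 1) = some i := by
      rw [← wv_fin hk i, wv_eq_iff hk, hIv, Nat.mod_add_mod,
        show i.val + (2*k-2) + 1 = i.val + (2*k-1) by omega, Nat.add_mod_right]
    have VA : fcol k σ (some i) s(some i, none) = spokeCol k σ (some i) i := by
      rw [Sym2.eq_swap, fcol_spoke]
    have VB : fcol k σ (some i) s(some i, wv k (i.val+1)) = rimCol k σ (some i) i := by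
      rw [← wv_fin hk i, fcol_rim' hk, wv_fin hk i]
      congr 1
      exact Fin.ext (by rw [fin_val_mk]; exact Nat.mod_eq_of_lt i.isLt)
    have VC : fcol k σ (some i) s(some i, wv k (i.val + (2*k-2)))
        = rimCol k σ (some i) i₀ := by
      rw [Sym2.eq_swap, ← hp1, fcol_rim' hk, hp1]
      congr 1
      exact Fin.ext (by rw [fin_val_mk, hIv])
    obtain ⟨nAB, nAC, nBC⟩ :
        (spokeCol k σ (some i) i ≠ rimCol k σ (some i) i) ∧
        (spokeCol k σ (some i) i ≠ rimCol k σ (some i) i₀) ∧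
        (rimCol k σ (some i) i ≠ rimCol k σ (some i) i₀) := by
      by_cases h0 : i.val = 0
      · have hi0 : i₀.val = 2*k-2 := by
          rw [hIv, h0, Nat.zero_add]
          exact Nat.mod_eq_of_lt (by omega)
        have hCval : rimCol k σ (some i) i₀
            = -(sA k σ (i₀.val/2-1) * sB k σ (i₀.val/2-1) * sC k σ (i₀.val/2-1)
                * sD k σ (i₀.val/2-1)) * cc (i₀.val/2-1) := by
          rw [← hnext]
          exact rc_next_even hk i₀ (by omega) (by omega)
        rw [sc_self_even i (by omega) (by omega), rc_self_zero i h0, hCval,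
          show i₀.val/2-1 = k-2 by omega]
        refine ⟨sign_cc_ne one ((((hsA hk hσ _).mul (hsB hk hσ _)).mul (hsC hk hσ _)).mul
            (hsD hk hσ _)) (by omega), ?_, ?_⟩
        · exact sign_cc_ne one ((((hsA hk hσ _).mul (hsB hk hσ _)).mul (hsC hk hσ _)).mul
            (hsD hk hσ _)).neg (by omega)
        · exact (neg_sign_cc_ne ((((hsA hk hσ _).mul (hsB hk hσ _)).mul (hsC hk hσ _)).mul
            (hsD hk hσ _)) _).symm
      · have hi0 : i₀.val = i.val - 1 := by
          rw [hIv, show i.val + (2*k-2) = (i.val - 1) + (2*k-1) by omega, Nat.add_mod_right]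
          exact Nat.mod_eq_of_lt (by omega)
        by_cases hl : i.val = 2*k-2
        · have hCval : rimCol k σ (some i) i₀
              = -(sA k σ (i₀.val/2) * sB k σ (i₀.val/2) * sC k σ (i₀.val/2)) * cc (i₀.val/2) := by
            rw [← hnext]
            exact rc_next_odd hk i₀ (by omega)
          rw [sc_self_last i hl, rc_self_even i (by omega) h0, hCval,
            show i₀.val/2 = i.val/2-1 by omega]
          exact ⟨(sign_cc_ne_zero (((hsA hk hσ _).mul (hsB hk hσ _)).mul (hsC hk hσ _)) _).symm,
            (sign_cc_ne_zero (((hsA hk hσ _).mul (hsB hk hσ _)).mul (hsC hk hσ _)).neg _).symm,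
            (neg_sign_cc_ne (((hsA hk hσ _).mul (hsB hk hσ _)).mul (hsC hk hσ _)) _).symm⟩
        · rcases Nat.even_or_odd i.val with he | ho
          · rw [Nat.even_iff] at he
            have hCval : rimCol k σ (some i) i₀
                = -(sA k σ (i₀.val/2) * sB k σ (i₀.val/2) * sC k σ (i₀.val/2)) * cc (i₀.val/2) := by
              rw [← hnext]
              exact rc_next_odd hk i₀ (by omega)
            rw [sc_self_even i hl he, rc_self_even i he h0, hCval,
              show i₀.val/2 = i.val/2-1 by omega]
            refine ⟨sign_cc_ne one (((hsA hk hσ _).mul (hsB hk hσ _)).mul (hsC hk hσ _))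
                (by omega), ?_, ?_⟩
            · exact sign_cc_ne one (((hsA hk hσ _).mul (hsB hk hσ _)).mul (hsC hk hσ _)).neg
                (by omega)
            · exact (neg_sign_cc_ne (((hsA hk hσ _).mul (hsB hk hσ _)).mul (hsC hk hσ _))
                _).symm
          · rw [Nat.odd_iff] at ho
            by_cases h1 : i.val = 1
            · have hz : i₀.val = 0 := by omega
              have hone : wv k 1 = wv k (i₀.val + 1) := by rw [hz]
              have hCval : rimCol k σ (some i) i₀
                  = -(sA k σ (k-2) * sB k σ (k-2) * sC k σ (k-2) * sD k σ (k-2) * sE k σ)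
                    * cc (k-2) := by
                rw [← hnext, ← hone]
                exact rc_next_zero hk i₀ hz
              rw [sc_self_odd i hl ho, rc_self_odd i ho, hCval]
              refine ⟨neg_sign_cc_ne ((hsA hk hσ _).mul (hsB hk hσ _)) _, ?_, ?_⟩
              · exact sign_cc_ne ((hsA hk hσ _).mul (hsB hk hσ _)).neg
                  (((((hsA hk hσ _).mul (hsB hk hσ _)).mul (hsC hk hσ _)).mul (hsD hk hσ _)).mul
                    (hsE hk hσ)).neg (by omega)
              · exact sign_cc_ne ((hsA hk hσ _).mul (hsB hk hσ _))
                  (((((hsA hk hσ _).mul (hsB hk hσ _)).mul (hsC hk hσ _)).mul (hsD hk hσ _)).mul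
                    (hsE hk hσ)).neg (by omega)
            · have hCval : rimCol k σ (some i) i₀
                  = -(sA k σ (i₀.val/2-1) * sB k σ (i₀.val/2-1) * sC k σ (i₀.val/2-1)
                      * sD k σ (i₀.val/2-1)) * cc (i₀.val/2-1) := by
                rw [← hnext]
                exact rc_next_even hk i₀ (by omega) (by omega)
              rw [sc_self_odd i hl ho, rc_self_odd i ho, hCval]
              refine ⟨neg_sign_cc_ne ((hsA hk hσ _).mul (hsB hk hσ _)) _, ?_, ?_⟩
              · exact sign_cc_ne ((hsA hk hσ _).mul (hsB hk hσ _)).neg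
                  ((((hsA hk hσ _).mul (hsB hk hσ _)).mul (hsC hk hσ _)).mul (hsD hk hσ _)).neg
                  (by omega)
              · exact sign_cc_ne ((hsA hk hσ _).mul (hsB hk hσ _))
                  ((((hsA hk hσ _).mul (hsB hk hσ _)).mul (hsC hk hσ _)).mul (hsD hk hσ _)).neg
                  (by omega)
    rcases nbhd hk huv with rfl | rfl | rfl <;> rcases nbhd hk huw with rfl | rfl | rfl
    · exact absurd rfl hvw
    · rw [VA, VB]; exact nAB
    · rw [VA, VC]; exact nAC
    · rw [VB, VA]; exact nAB.symm
    · exact absurd rfl hvw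
    · rw [VB, VC]; exact nBC
    · rw [VC, VA]; exact nAC.symm
    · rw [VC, VB]; exact nBC.symm
    · exact absurd rfl hvw
lemma colorable_upper (hk : 3 ≤ k) (hσ : Signed.IsSignature (Wheel (2*k-1)) σ) :
    Signed.Colorable (Wheel (2*k-1)) σ (2*k-1) :=
  ⟨fcol k σ, cond1 hk hσ, cond2 hk hσ, cond3 hk hσ⟩

lemma chromIndex_wheel (hk : 3 ≤ k) (hσ : Signed.IsSignature (Wheel (2*k-1)) σ) :
    Signed.chromIndex (Wheel (2*k-1)) σ = 2*k-1 := by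
  have hmem : (2*k-1) ∈ {n | Signed.Colorable (Wheel (2*k-1)) σ n} := colorable_upper hk hσ
  have hne : {n | Signed.Colorable (Wheel (2*k-1)) σ n}.Nonempty := ⟨2*k-1, hmem⟩
  apply le_antisymm
  · exact Nat.sInf_le hmem
  · exact colorable_lower hk σ _ (Nat.sInf_mem hne)

lemma class1pm_wheel (hk : 3 ≤ k) : Signed.Class1pm (Wheel (2*k-1)) := by
  intro σ hσ
  rw [maxDeg_wheel hk]
  exact chromIndex_wheel hk hσ

end WheelAux

open WheelAux in
/-- For `n = 2k` with `k ≥ 3`, the wheel `W_n` (rim length `2k−1`) decomposes into `k−1`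
pairwise edge-disjoint paths and a single edge; consequently it is of class `1^±`. -/
theorem wheel_even_class1 (k : ℕ) (hk : 3 ≤ k) :
    (∃ (D : Fin (k - 1) → SimpleGraph (Option (Fin (2 * k - 1))))
       (e : Sym2 (Option (Fin (2 * k - 1)))),
      e ∈ (Wheel (2 * k - 1)).edgeSet ∧
      (∀ i, D i ≤ Wheel (2 * k - 1)) ∧
      (∀ i, IsPathGraph (D i)) ∧
      (∀ i j, i ≠ j → Disjoint ((D i).edgeSet) ((D j).edgeSet)) ∧
      (∀ i, e ∉ (D i).edgeSet) ∧
      ((⋃ i, (D i).edgeSet) ∪ {e}) = (Wheel (2 * k - 1)).edgeSet) ∧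
    Class1pm (Wheel (2 * k - 1)) := by
  constructor
  · refine ⟨fun i => SimpleGraph.fromEdgeSet (pE k i.val), spoke k (2*k-2),
      spoke_mem hk _, ?_, ?_, ?_, ?_, ?_⟩
    · intro i
      have h := SimpleGraph.fromEdgeSet_mono (pE_subset hk i.val)
      rwa [SimpleGraph.fromEdgeSet_edgeSet] at h
    · intro i
      exact isPathGraph_pE hk (by have := i.isLt; omega)
    · intro i j hij
      rw [edgeSet_pE hk, edgeSet_pE hk]
      exact pE_disj hk (by have := i.isLt; omega) (by have := j.isLt; omega)
        (fun h => hij (Fin.ext h))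
    · intro i
      rw [edgeSet_pE hk]
      exact spoke_e_not_mem hk (by have := i.isLt; omega)
    · have hU : (⋃ i : Fin (k-1), (SimpleGraph.fromEdgeSet (pE k i.val)).edgeSet)
          = ⋃ i : Fin (k-1), pE k i.val :=
        Set.iUnion_congr (fun i => edgeSet_pE hk i.val)
      rw [hU]
      exact union_pE hk
  · exact class1pm_wheel hk
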